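/- Let N be a finitely generated normal subgroup of a group G, and assume N is residually simple: for every non-trivial element x of N there exist a finite non-abelian simple group S and a surjective homomorphism f : N → S with f(x) ≠ 1. If Φ_f(G/N) is trivial, then Φ_f(G) is trivial. -/

import Mathlib

/-- `phiF G` is the intersection of all maximal subgroups of finite index in `G`
(equal to `G` itself, i.e. `⊤`, if there are no such subgroups). -/
def phiF (G : Type*) [Group G] : Subgroup G :=
  ⨅ M ∈ {M : Subgroup G | IsCoatom M ∧ M.FiniteIndex}, M

/-- A group `N` is residually simple if every non-trivial element survives in
some finite non-abelian simple quotient. -/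
def IsResiduallySimple (N : Type*) [Group N] : Prop :=
  ∀ x : N, x ≠ 1 → ∃ (S : Type) (_ : Group S), Finite S ∧ IsSimpleGroup S ∧
    (¬ ∀ a b : S, a * b = b * a) ∧ ∃ f : N →* S, Function.Surjective f ∧ f x ≠ 1

open Subgroup Function

lemma phiF_le_comap_of_surjective {G Q : Type*} [Group G] [Group Q] (π : G →* Q)
    (hπ : Function.Surjective π) : phiF G ≤ (phiF Q).comap π := by
  rw [phiF, phiF]
  simp_rw [Subgroup.comap_iInf, le_iInf_iff]
  intro M hM
  exact biInf_le _ ⟨Subgroup.isCoatom_comap_of_surjective hπ hM.1,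
    ⟨by rw [Subgroup.index_comap_of_surjective _ hπ]; exact hM.2.index_ne_zero⟩⟩

lemma phiF_le_comap_frattini_of_surjective {G Q : Type*} [Group G] [Group Q] [Finite Q]
    (π : G →* Q) (hπ : Function.Surjective π) : phiF G ≤ (frattini Q).comap π := by
  rw [phiF, frattini, Order.radical]
  simp_rw [Subgroup.comap_iInf, le_iInf_iff]
  intro M hM
  exact biInf_le _ ⟨Subgroup.isCoatom_comap_of_surjective hπ hM,
    ⟨by rw [Subgroup.index_comap_of_surjective _ hπ]
        exact (Subgroup.finiteIndex_of_finite (H := M)).index_ne_zero⟩⟩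

/-- If `N` is a finitely generated, residually simple, normal
subgroup of `G` and `Φ_f(G/N)` is trivial, then `Φ_f(G)` is trivial. -/
theorem phiF_eq_bot_of_residuallySimple_normal {G : Type*} [Group G]
    (N : Subgroup G) [N.Normal] (hfg : Group.FG N)
    (hres : IsResiduallySimple N)
    (hquot : phiF (G ⧸ N) = ⊥) :
    phiF G = ⊥ := by
  rw [eq_bot_iff]
  intro g hg
  rw [Subgroup.mem_bot]
  -- Step A : g ∈ N
  have hgN : g ∈ N := by
    have h1 := phiF_le_comap_of_surjective (QuotientGroup.mk' N)
      (QuotientGroup.mk'_surjective N) hg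
    rw [hquot, Subgroup.mem_comap, Subgroup.mem_bot] at h1
    exact (QuotientGroup.eq_one_iff g).mp h1
  by_contra hgne
  set x : N := ⟨g, hgN⟩ with hxdef
  have hx : x ≠ 1 := fun h => hgne (congrArg Subtype.val h)
  obtain ⟨S, instS, hfinS, hsimpS, hnc, f, hfsurj, hfx⟩ := hres x hx
  letI := instS
  haveI := hfinS
  haveI := hsimpS
  -- the center of S is trivial
  have hZ : Subgroup.center S = ⊥ := by
    rcases IsSimpleGroup.eq_bot_or_eq_top_of_normal (Subgroup.center S) inferInstance with h | h
    · exact h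
    · exact absurd (fun a b => (Subgroup.mem_center_iff.mp (h ▸ Subgroup.mem_top a) b).symm) hnc
  -- finitely many homs N →* S
  obtain ⟨s, hs, hsfin⟩ := Group.fg_iff.mp hfg
  haveI := hsfin.to_subtype
  haveI : Finite (N →* S) := by
    refine Finite.of_injective (fun φ (y : s) => φ y.1) ?_
    intro φ ψ h
    exact MonoidHom.eq_of_eqOn_dense hs fun y hy => congrFun h ⟨y, hy⟩
  -- D : intersection of kernels of all surjections N →* S
  set D : Subgroup N := ⨅ φ : {φ : N →* S // Function.Surjective φ}, φ.1.ker with hD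
  have hDle : ∀ φ : {φ : N →* S // Function.Surjective φ}, D ≤ φ.1.ker := fun φ => iInf_le _ φ
  haveI hDfin : D.FiniteIndex := Subgroup.finiteIndex_iInf fun φ => inferInstance
  -- D' : D as a subgroup of G; it is normal in G
  set D' : Subgroup G := D.map N.subtype with hD'
  haveI hD'norm : D'.Normal := by
    constructor
    intro a ha y
    obtain ⟨d, hd, rfl⟩ := ha
    refine ⟨⟨y * (d : G) * y⁻¹, ‹N.Normal›.conj_mem (d : G) d.2 y⟩, ?_, rfl⟩
    simp only [SetLike.mem_coe] at hd ⊢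
    rw [hD, Subgroup.mem_iInf]
    intro φ
    have heq : (⟨y * (d : G) * y⁻¹, ‹N.Normal›.conj_mem (d : G) d.2 y⟩ : N)
        = MulAut.conjNormal y d := Subtype.ext (MulAut.conjNormal_apply y d).symm
    rw [MonoidHom.mem_ker, heq]
    have hmem := Subgroup.mem_iInf.mp hd
      ⟨φ.1.comp (MulAut.conjNormal y).toMonoidHom,
        φ.2.comp (MulAut.conjNormal y : MulAut N).surjective⟩
    exact hmem
  -- first quotient
  set ρ₁ : N →* G ⧸ D' := (QuotientGroup.mk' D').comp N.subtype with hρ₁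
  have hker₁ : ρ₁.ker = D := by
    rw [hρ₁, ← MonoidHom.comap_ker, QuotientGroup.ker_mk',
      Subgroup.comap_map_eq_self_of_injective N.subtype_injective]
  haveI : ρ₁.ker.FiniteIndex := hker₁ ▸ hDfin
  haveI : Finite (ρ₁.range) := Finite.of_equiv _ (QuotientGroup.quotientKerEquivRange ρ₁).toEquiv
  haveI hMnorm : ρ₁.range.Normal := by
    have h1 : ρ₁.range = N.map (QuotientGroup.mk' D') := by
      rw [hρ₁, MonoidHom.range_comp, Subgroup.range_subtype]
    rw [h1]
    exact Subgroup.Normal.map inferInstance _ (QuotientGroup.mk'_surjective D')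
  -- centralizer of the image of N
  set cn : (G ⧸ D') →* MulAut ρ₁.range := MulAut.conjNormal with hcn
  haveI : Finite (MulAut ρ₁.range) :=
    Finite.of_injective (fun (e : MulAut ρ₁.range) => ⇑e) DFunLike.coe_injective
  set C : Subgroup (G ⧸ D') := cn.ker with hC
  haveI : C.FiniteIndex := inferInstance
  haveI : Finite ((G ⧸ D') ⧸ C) := Subgroup.finite_quotient_of_finiteIndex
  -- the finite quotient Q of G
  set π : G →* (G ⧸ D') ⧸ C := (QuotientGroup.mk' C).comp (QuotientGroup.mk' D') with hπdef
  have hπs : Function.Surjective π :=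
    (QuotientGroup.mk'_surjective C).comp (QuotientGroup.mk'_surjective D')
  set ρ : N →* (G ⧸ D') ⧸ C := (QuotientGroup.mk' C).comp ρ₁ with hρdef
  -- key : the kernel of ρ is exactly D
  have hkerρ : ρ.ker = D := by
    apply le_antisymm
    · intro n hn
      rw [MonoidHom.mem_ker, hρdef, MonoidHom.comp_apply] at hn
      have h1 : ρ₁ n ∈ C := by
        rwa [← QuotientGroup.ker_mk' C, MonoidHom.mem_ker]
      rw [hD, Subgroup.mem_iInf]
      intro φ
      rw [MonoidHom.mem_ker]
      have hcenter : φ.1 n ∈ Subgroup.center S := by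
        rw [Subgroup.mem_center_iff]
        intro t
        obtain ⟨m, rfl⟩ := φ.2 t
        have h2 : cn (ρ₁ n) = 1 := h1
        have h3 : ((cn (ρ₁ n)) (⟨ρ₁ m, ⟨m, rfl⟩⟩ : ρ₁.range) : G ⧸ D')
            = ((⟨ρ₁ m, ⟨m, rfl⟩⟩ : ρ₁.range) : G ⧸ D') := by rw [h2]; rfl
        have h4 : ρ₁ n * ρ₁ m * (ρ₁ n)⁻¹ = ρ₁ m := by
          rwa [hcn, MulAut.conjNormal_apply] at h3
        have h5 : n * m * n⁻¹ * m⁻¹ ∈ ρ₁.ker := by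
          rw [MonoidHom.mem_ker, map_mul, map_mul, map_mul, map_inv, map_inv, h4,
            mul_inv_cancel]
        rw [hker₁] at h5
        have h6 : φ.1 (n * m * n⁻¹ * m⁻¹) = 1 := hDle φ h5
        open scoped commutatorElement in
        have h7 : ⁅φ.1 n, φ.1 m⁆ = 1 := by
          rw [commutatorElement_def]
          simpa [map_mul, map_inv] using h6
        exact (commutatorElement_eq_one_iff_commute.mp h7).symm.eq
      rw [hZ, Subgroup.mem_bot] at hcenter
      exact hcenter
    · intro n hn
      rw [MonoidHom.mem_ker, hρdef, MonoidHom.comp_apply]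
      have : ρ₁ n = 1 := by
        rw [← MonoidHom.mem_ker, hker₁]; exact hn
      rw [this, map_one]
  -- the image of g lies in the Frattini subgroup of the finite quotient
  have hπg : π g ∈ frattini ((G ⧸ D') ⧸ C) :=
    Subgroup.mem_comap.mp (phiF_le_comap_frattini_of_surjective π hπs hg)
  set R : Subgroup N := Subgroup.comap ρ (frattini ((G ⧸ D') ⧸ C)) with hR
  have hxR : x ∈ R := by
    rw [hR, Subgroup.mem_comap]
    exact hπg
  haveI hRnorm : R.Normal := Subgroup.Normal.comap inferInstance ρ
  haveI : Group.IsNilpotent (frattini ((G ⧸ D') ⧸ C)) := frattini_nilpotent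
  -- R is contained in the kernel of every surjection N →* S
  have key : ∀ φ : {φ : N →* S // Function.Surjective φ}, R ≤ φ.1.ker := by
    intro φ
    rcases IsSimpleGroup.eq_bot_or_eq_top_of_normal (R.map φ.1)
      (Subgroup.Normal.map hRnorm φ.1 φ.2) with hb | ht
    · intro r hr
      rw [MonoidHom.mem_ker]
      have h1 : φ.1 r ∈ R.map φ.1 := Subgroup.mem_map_of_mem _ hr
      rw [hb, Subgroup.mem_bot] at h1
      exact h1
    · exfalso
      set ρR : R →* (frattini ((G ⧸ D') ⧸ C)) :=
        (ρ.comp R.subtype).codRestrict _ (fun r => Subgroup.mem_comap.mp r.2) with hρR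
      set φR : R →* S := φ.1.comp R.subtype with hφR
      have hφRs : Function.Surjective φR := by
        intro t
        have h1 : t ∈ R.map φ.1 := ht ▸ Subgroup.mem_top t
        obtain ⟨r, hr, rfl⟩ := h1
        exact ⟨⟨r, hr⟩, rfl⟩
      have hkk : ρR.ker ≤ φR.ker := by
        intro r hr
        rw [hρR, MonoidHom.ker_codRestrict, ← MonoidHom.comap_ker, hkerρ,
          Subgroup.mem_comap] at hr
        rw [hφR, MonoidHom.mem_ker, MonoidHom.comp_apply]
        exact hDle φ hr
      haveI : Group.IsNilpotent (R ⧸ ρR.ker) :=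
        nilpotent_of_surjective (QuotientGroup.quotientKerEquivRange ρR).symm.toMonoidHom
          (MulEquiv.surjective _)
      set θ : (R ⧸ ρR.ker) →* (R ⧸ φR.ker) :=
        QuotientGroup.map ρR.ker φR.ker (MonoidHom.id R) (by simpa using hkk) with hθ
      have hθs : Function.Surjective θ := fun q =>
        QuotientGroup.induction_on q fun r => ⟨QuotientGroup.mk r, rfl⟩
      haveI : Group.IsNilpotent S :=
        nilpotent_of_surjective
          ((QuotientGroup.quotientKerEquivOfSurjective φR hφRs).toMonoidHom.comp θ)
          (((QuotientGroup.quotientKerEquivOfSurjective φR hφRs).surjective).comp hθs)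
      exact hnc (IsSimpleGroup.comm_iff_isSolvable.mpr inferInstance)
  have hfinal : f x = 1 := key ⟨f, hfsurj⟩ hxR
  exact hfx hfinal
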